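/- arXiv:1406.6746 — 2 statements merged into one kernel-verified Lean document; each statement's English description precedes it below -/
import Mathlib

section
/- For every finite simple graph H with at least one edge, s(H) ≥ 2δ(H) − 1, where δ(H) is the minimum degree of H. -/
open SimpleGraph

/-- The subgraph of `F` consisting of the edges that receive color `b` under the
edge 2-coloring `c` (colors are `Bool`: `true` = red, `false` = blue). -/
def colorSubgraph {V : Type*} (F : SimpleGraph V) (c : Sym2 V → Bool) (b : Bool) :
    SimpleGraph V where
  Adj x y := F.Adj x y ∧ c s(x, y) = b
  symm := by
    constructor
    intro x y h
    exact ⟨h.1.symm, by rw [Sym2.eq_swap]; exact h.2⟩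
  loopless := by
    constructor
    intro x h
    exact F.irrefl h.1

/-- `G` contains a copy of `H`, i.e. a subgraph isomorphic to `H`. -/
def ContainsCopy {V W : Type*} (G : SimpleGraph V) (H : SimpleGraph W) : Prop :=
  ∃ f : W → V, Function.Injective f ∧ ∀ ⦃a b⦄, H.Adj a b → G.Adj (f a) (f b)

/-- The 2-coloring `c` of (the edges of) `F` contains a monochromatic copy of `H`. -/
def HasMonoCopy {V W : Type*} (F : SimpleGraph V) (H : SimpleGraph W)
    (c : Sym2 V → Bool) : Prop :=
  ∃ b : Bool, ContainsCopy (colorSubgraph F c b) H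

/-- `F → H`: every 2-coloring of the edges of `F` contains a monochromatic copy of `H`. -/
def IsRamseyFor {V W : Type*} (F : SimpleGraph V) (H : SimpleGraph W) : Prop :=
  ∀ c : Sym2 V → Bool, HasMonoCopy F H c

/-- `F` is Ramsey `H`-minimal: `F → H` but no proper subgraph of `F` is Ramsey for `H`. -/
def IsRamseyMinimalFor {V W : Type*} (F : SimpleGraph V) (H : SimpleGraph W) : Prop :=
  IsRamseyFor F H ∧ ∀ F' : F.Subgraph, F' ≠ ⊤ → ¬ IsRamseyFor F'.coe H

/-- The degree of the vertex `v` in `G`. -/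
noncomputable def degOf {V : Type*} (G : SimpleGraph V) (v : V) : ℕ :=
  (G.neighborSet v).ncard

/-- The minimum degree `δ(G)`. -/
noncomputable def minDeg {V : Type*} (G : SimpleGraph V) : ℕ :=
  sInf {k | ∃ v, degOf G v = k}

/-- `s(H)`: the minimum of `δ(F)` over all Ramsey `H`-minimal graphs `F`. -/
noncomputable def sVal {W : Type*} (H : SimpleGraph W) : ℕ :=
  sInf {k | ∃ (n : ℕ) (F : SimpleGraph (Fin n)), IsRamseyMinimalFor F H ∧ minDeg F = k}

/-! ### Auxiliary lemmas -/

lemma colorSubgraph_adj {V : Type*} (F : SimpleGraph V) (c : Sym2 V → Bool) (b : Bool)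
    (x y : V) : (colorSubgraph F c b).Adj x y ↔ F.Adj x y ∧ c s(x, y) = b := Iff.rfl

lemma adj_of_edge {V : Type*} {G : SimpleGraph V} (h : G.edgeSet.Nonempty) :
    ∃ a b, G.Adj a b := by
  obtain ⟨p, hp⟩ := h
  induction p using Sym2.ind with
  | _ a b => exact ⟨a, b, hp⟩

/-- Ramsey's theorem for two colors. -/
lemma ramsey_aux : ∀ (k s t : ℕ), s + t ≤ k →
    ∃ N : ℕ, ∀ (V : Type) [DecidableEq V] (S : Finset V) (c : Sym2 V → Bool),
      N ≤ S.card →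
      ∃ (b : Bool) (A : Finset V), A ⊆ S ∧ (if b then s else t) ≤ A.card ∧
        ∀ x ∈ A, ∀ y ∈ A, x ≠ y → c s(x, y) = b := by
  intro k
  induction k with
  | zero =>
    intro s t hst
    refine ⟨0, fun V _ S c _ => ⟨true, ∅, Finset.empty_subset _, ?_, by simp⟩⟩
    simp; omega
  | succ k ih =>
    intro s t hst
    rcases s with _ | s
    · exact ⟨0, fun V _ S c _ => ⟨true, ∅, Finset.empty_subset _, by simp, by simp⟩⟩
    rcases t with _ | t
    · exact ⟨0, fun V _ S c _ => ⟨false, ∅, Finset.empty_subset _, by simp, by simp⟩⟩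
    obtain ⟨N₁, h₁⟩ := ih s (t + 1) (by omega)
    obtain ⟨N₂, h₂⟩ := ih (s + 1) t (by omega)
    refine ⟨N₁ + N₂ + 1, ?_⟩
    intro V _ S c hcard
    obtain ⟨v, hv⟩ : S.Nonempty := Finset.card_pos.mp (by omega)
    classical
    set T := S.erase v with hT
    have hTcard : N₁ + N₂ ≤ T.card := by
      rw [hT, Finset.card_erase_of_mem hv]; omega
    set T₁ := T.filter (fun u => c s(v, u) = true) with hT₁
    set T₂ := T.filter (fun u => ¬ (c s(v, u) = true)) with hT₂
    have hsplit : T₁.card + T₂.card = T.card :=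
      Finset.card_filter_add_card_filter_not _
    rcases (by omega : N₁ ≤ T₁.card ∨ N₂ ≤ T₂.card) with hc1 | hc2
    · obtain ⟨b, A, hAsub, hAcard, hmono⟩ := h₁ V T₁ c hc1
      have hAS : A ⊆ S :=
        hAsub.trans ((Finset.filter_subset _ _).trans (Finset.erase_subset _ _))
      cases b with
      | false => exact ⟨false, A, hAS, hAcard, hmono⟩
      | true =>
        have hvA : v ∉ A := fun h =>
          Finset.notMem_erase v S (Finset.filter_subset _ _ (hAsub h))
        refine ⟨true, insert v A, Finset.insert_subset hv hAS, ?_, ?_⟩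
        · rw [Finset.card_insert_of_notMem hvA]
          show s + 1 ≤ A.card + 1
          have h' : s ≤ A.card := hAcard
          omega
        · intro x hx y hy hxy
          rcases Finset.mem_insert.mp hx with rfl | hx'
          · rcases Finset.mem_insert.mp hy with rfl | hy'
            · exact absurd rfl hxy
            · exact (Finset.mem_filter.mp (hAsub hy')).2
          · rcases Finset.mem_insert.mp hy with rfl | hy'
            · rw [Sym2.eq_swap]; exact (Finset.mem_filter.mp (hAsub hx')).2
            · exact hmono x hx' y hy' hxy
    · obtain ⟨b, A, hAsub, hAcard, hmono⟩ := h₂ V T₂ c hc2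
      have hAS : A ⊆ S :=
        hAsub.trans ((Finset.filter_subset _ _).trans (Finset.erase_subset _ _))
      cases b with
      | true => exact ⟨true, A, hAS, hAcard, hmono⟩
      | false =>
        have hvA : v ∉ A := fun h =>
          Finset.notMem_erase v S (Finset.filter_subset _ _ (hAsub h))
        refine ⟨false, insert v A, Finset.insert_subset hv hAS, ?_, ?_⟩
        · rw [Finset.card_insert_of_notMem hvA]
          show t + 1 ≤ A.card + 1
          have h' : t ≤ A.card := hAcard
          omega
        · intro x hx y hy hxy
          rcases Finset.mem_insert.mp hx with rfl | hx'
          · rcases Finset.mem_insert.mp hy with rfl | hy'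
            · exact absurd rfl hxy
            · exact Bool.eq_false_iff.mpr (Finset.mem_filter.mp (hAsub hy')).2
          · rcases Finset.mem_insert.mp hy with rfl | hy'
            · rw [Sym2.eq_swap]
              exact Bool.eq_false_iff.mpr ((Finset.mem_filter.mp (hAsub hx')).2)
            · exact hmono x hx' y hy' hxy

lemma exists_top_ramsey (W : Type) [Fintype W] (H : SimpleGraph W) :
    ∃ N : ℕ, IsRamseyFor (⊤ : SimpleGraph (Fin N)) H := by
  classical
  obtain ⟨N, hN⟩ := ramsey_aux (Fintype.card W + Fintype.card W)
    (Fintype.card W) (Fintype.card W) le_rfl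
  refine ⟨N, fun c => ?_⟩
  obtain ⟨b, A, -, hAcard, hmono⟩ := hN (Fin N) Finset.univ c (by simp)
  have hcard : Fintype.card W ≤ A.card := by cases b <;> simpa using hAcard
  obtain ⟨emb⟩ : Nonempty (W ↪ A) :=
    Function.Embedding.nonempty_of_card_le (by simpa [Fintype.card_coe] using hcard)
  refine ⟨b, fun w => (emb w : Fin N), Subtype.coe_injective.comp emb.injective, ?_⟩
  intro a b' hab
  have hne : (emb a : Fin N) ≠ (emb b' : Fin N) :=
    fun h => hab.ne (emb.injective (Subtype.coe_injective h))
  exact ⟨by simpa using hne, hmono _ (emb a).2 _ (emb b').2 hne⟩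

lemma isRamseyFor_of_equiv {V V₂ W : Type} (e : V ≃ V₂) {G : SimpleGraph V}
    {G₂ : SimpleGraph V₂} {H : SimpleGraph W}
    (hadj : ∀ x y, G₂.Adj x y ↔ G.Adj (e.symm x) (e.symm y))
    (h : IsRamseyFor G H) : IsRamseyFor G₂ H := by
  intro c
  obtain ⟨b, f, hinj, hadj'⟩ := h (fun p => c (Sym2.map e p))
  refine ⟨b, fun w => e (f w), e.injective.comp hinj, ?_⟩
  intro a b' hab
  obtain ⟨h1, h2⟩ := hadj' hab
  refine ⟨(hadj _ _).mpr (by simpa using h1), ?_⟩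
  simpa [Sym2.map_pair_eq] using h2

lemma exists_minimal (W : Type) [Fintype W] (H : SimpleGraph W) :
    ∀ (N n : ℕ) (F : SimpleGraph (Fin n)), n + F.edgeSet.ncard ≤ N →
      IsRamseyFor F H → (∃ a b, H.Adj a b) →
      ∃ (m : ℕ) (G : SimpleGraph (Fin m)), IsRamseyMinimalFor G H := by
  intro N
  induction N with
  | zero =>
    intro n F hle hF hH
    obtain ⟨a, b, hab⟩ := hH
    have hn : n = 0 := by omega
    subst hn
    obtain ⟨_, f, _, _⟩ := hF (fun _ => true)
    exact (f a).elim0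
  | succ N ih =>
    intro n F hle hF hH
    by_cases hmin : IsRamseyMinimalFor F H
    · exact ⟨n, F, hmin⟩
    obtain ⟨F', hne, hF'⟩ : ∃ F' : F.Subgraph, F' ≠ ⊤ ∧ IsRamseyFor F'.coe H := by
      by_contra hcon
      push_neg at hcon
      exact hmin ⟨hF, fun F' h => hcon F' h⟩
    haveI : Fintype ↥F'.verts := Fintype.ofFinite _
    obtain ⟨m, ⟨e⟩⟩ := Finite.exists_equiv_fin ↥F'.verts
    set G : SimpleGraph (Fin m) :=
      { Adj := fun x y => F'.coe.Adj (e.symm x) (e.symm y),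
        symm := ⟨fun x y h => F'.coe.adj_symm h⟩,
        loopless := ⟨fun x h => F'.coe.irrefl h⟩ } with hGdef
    have hG : IsRamseyFor G H := isRamseyFor_of_equiv e (fun x y => Iff.rfl) hF'
    set g : Fin m → Fin n := fun x => ((e.symm x : ↥F'.verts) : Fin n) with hgdef
    have hg : Function.Injective g := Subtype.coe_injective.comp e.symm.injective
    have hmn : m ≤ n := by
      simpa using Fintype.card_le_of_injective g hg
    have himg : (Sym2.map g) '' G.edgeSet ⊆ F.edgeSet := by
      rintro q ⟨p, hp, rfl⟩
      induction p using Sym2.ind with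
      | _ x y =>
        rw [Sym2.map_pair_eq]
        rw [SimpleGraph.mem_edgeSet] at hp ⊢
        exact F'.adj_sub hp
    by_cases hverts : F'.verts = Set.univ
    · obtain ⟨x, y, hFxy, hF'xy⟩ : ∃ x y, F.Adj x y ∧ ¬ F'.Adj x y := by
        by_contra hcon
        push_neg at hcon
        apply hne
        refine SimpleGraph.Subgraph.ext (by simp [hverts]) ?_
        funext x y
        exact propext ⟨fun h => by simpa using F'.adj_sub h,
          fun h => hcon x y (by simpa using h)⟩
      have hstrict : (Sym2.map g) '' G.edgeSet ⊂ F.edgeSet := by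
        refine ⟨himg, fun hsup => ?_⟩
        have hmem : s(x, y) ∈ (Sym2.map g) '' G.edgeSet :=
          hsup (F.mem_edgeSet.mpr hFxy)
        obtain ⟨p, hp, hpq⟩ := hmem
        induction p using Sym2.ind with
        | _ a b' =>
          rw [Sym2.map_pair_eq] at hpq
          have hadj : F'.Adj (g a) (g b') := by
            rw [SimpleGraph.mem_edgeSet] at hp
            exact hp
          rcases Sym2.eq_iff.mp hpq with ⟨h1, h2⟩ | ⟨h1, h2⟩
          · exact hF'xy (h1 ▸ h2 ▸ hadj)
          · exact hF'xy (h1 ▸ h2 ▸ hadj.symm)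
      have hlt : G.edgeSet.ncard < F.edgeSet.ncard := by
        have := Set.ncard_lt_ncard hstrict (Set.toFinite _)
        rwa [Set.ncard_image_of_injective _ (Sym2.map.injective hg)] at this
      exact ih m G (by omega) hG hH
    · obtain ⟨x, hx⟩ : ∃ x, x ∉ F'.verts := by
        rwa [← Set.ne_univ_iff_exists_notMem]
      have hxr : x ∉ Set.range g := by
        rintro ⟨z, rfl⟩; exact hx (e.symm z).2
      have hmn' : m < n := by
        simpa using Fintype.card_lt_of_injective_of_notMem g hg hxr
      have hEle : G.edgeSet.ncard ≤ F.edgeSet.ncard := by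
        have := Set.ncard_le_ncard himg (Set.toFinite _)
        rwa [Set.ncard_image_of_injective _ (Sym2.map.injective hg)] at this
      exact ih m G (by omega) hG hH

/-- The coloring used in the degree argument: edges at `v` are colored according to
membership of the other endpoint in `A`, other edges get the color from `c'`. -/
def mixColor {n : ℕ} (v : Fin n) (A : Finset (Fin n)) (vs : Set (Fin n))
    (hvs : ∀ x, x ≠ v → x ∈ vs) (c' : Sym2 ↥vs → Bool) : Sym2 (Fin n) → Bool :=
  Sym2.lift ⟨fun x y =>
    if hx : x = v then (if y ∈ A then true else false)
    else if hy : y = v then (if x ∈ A then true else false)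
    else c' s(⟨x, hvs x hx⟩, ⟨y, hvs y hy⟩), by
  intro x y
  rcases eq_or_ne x v with hx | hx
  · rcases eq_or_ne y v with hy | hy
    · simp [hx, hy]
    · simp [hx, hy]
  · rcases eq_or_ne y v with hy | hy
    · simp [hx, hy]
    · simp only [dif_neg hx, dif_neg hy]
      rw [Sym2.eq_swap]⟩

lemma mixColor_left {n : ℕ} (v : Fin n) (A : Finset (Fin n)) (vs : Set (Fin n))
    (hvs : ∀ x, x ≠ v → x ∈ vs) (c' : Sym2 ↥vs → Bool) (u : Fin n) :
    mixColor v A vs hvs c' s(v, u) = (if u ∈ A then true else false) := by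
  simp [mixColor]

lemma mixColor_ne {n : ℕ} (v : Fin n) (A : Finset (Fin n)) (vs : Set (Fin n))
    (hvs : ∀ x, x ≠ v → x ∈ vs) (c' : Sym2 ↥vs → Bool) {x y : Fin n}
    (hx : x ≠ v) (hy : y ≠ v) :
    mixColor v A vs hvs c' s(x, y) = c' s(⟨x, hvs x hx⟩, ⟨y, hvs y hy⟩) := by
  simp [mixColor, hx, hy]

lemma core_bound {W : Type} [Fintype W] (H : SimpleGraph W) (hedge : H.edgeSet.Nonempty)
    {n : ℕ} {F : SimpleGraph (Fin n)} (hF : IsRamseyMinimalFor F H) :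
    2 * minDeg H - 1 ≤ minDeg F := by
  classical
  set δ := minDeg H with hδdef
  rcases Nat.eq_zero_or_pos δ with hδ | hδ
  · simp [hδ]
  by_contra hcon
  push_neg at hcon
  obtain ⟨a0, b0, hab⟩ := adj_of_edge hedge
  have hnemp : Nonempty (Fin n) := by
    obtain ⟨b, f, hfinj, hfadj⟩ := hF.1 (fun _ => true)
    exact ⟨f a0⟩
  obtain ⟨v, hv⟩ : ∃ v, degOf F v = minDeg F :=
    Nat.sInf_mem (⟨degOf F hnemp.some, hnemp.some, rfl⟩ :
      Set.Nonempty {k | ∃ v, degOf F v = k})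
  have hdegv : degOf F v ≤ 2 * δ - 2 := by omega
  have hApre : min (δ - 1) (degOf F v) ≤ (F.neighborSet v).toFinset.card := by
    rw [← Set.ncard_eq_toFinset_card']
    exact min_le_right _ _
  obtain ⟨A, hAsub, hAcard⟩ := Finset.exists_subset_card_eq hApre
  set F' := (⊤ : F.Subgraph).deleteVerts {v} with hF'
  have hvmem : ∀ x : Fin n, x ≠ v → x ∈ F'.verts := by
    intro x hx
    rw [hF']
    simp only [SimpleGraph.Subgraph.deleteVerts_verts, SimpleGraph.Subgraph.verts_top]
    exact ⟨Set.mem_univ x, by simpa using hx⟩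
  have hF'ne : F' ≠ ⊤ := by
    intro h
    have hvv : v ∈ F'.verts := by rw [h]; simp
    rw [hF'] at hvv
    simp at hvv
  obtain ⟨c', hc'⟩ : ∃ c' : Sym2 ↥F'.verts → Bool, ¬ HasMonoCopy F'.coe H c' := by
    by_contra hcon2
    push_neg at hcon2
    exact hF.2 F' hF'ne fun c => hcon2 c
  obtain ⟨b, f, hfinj, hfadj⟩ := hF.1 (mixColor v A F'.verts hvmem c')
  by_cases hvr : v ∈ Set.range f
  · obtain ⟨w₀, hw₀⟩ := hvr
    have key : ∀ u, H.Adj w₀ u → f u ∈ F.neighborSet v ∧ ((f u ∈ A) ↔ (b = true)) := by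
      intro u hu
      obtain ⟨h1, h2⟩ := hfadj hu
      rw [hw₀] at h1 h2
      rw [mixColor_left] at h2
      refine ⟨h1, ?_⟩
      by_cases hA : f u ∈ A
      · rw [if_pos hA] at h2
        simp [hA, ← h2]
      · rw [if_neg hA] at h2
        simp [hA, ← h2]
    have hδw : δ ≤ degOf H w₀ := Nat.sInf_le ⟨w₀, rfl⟩
    set T : Set (Fin n) := f '' (H.neighborSet w₀) with hT
    have hTcard : degOf H w₀ = T.ncard :=
      (Set.ncard_image_of_injective _ hfinj).symm
    cases b with
    | true =>
      have hsub : T ⊆ ↑A := by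
        rintro _ ⟨u, hu, rfl⟩
        exact (key u hu).2.mpr rfl
      have hle := Set.ncard_le_ncard hsub (A.finite_toSet)
      rw [Set.ncard_coe_finset] at hle
      have hA1 : A.card ≤ δ - 1 := by rw [hAcard]; exact min_le_left _ _
      omega
    | false =>
      have hsub : T ⊆ ↑((F.neighborSet v).toFinset \ A) := by
        rintro _ ⟨u, hu, rfl⟩
        obtain ⟨h1, h2⟩ := key u hu
        simp only [Finset.coe_sdiff, Set.mem_diff, Finset.mem_coe,
          Set.mem_toFinset]
        exact ⟨h1, fun hA => by simpa using h2.mp hA⟩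
      have hcard2 : ((F.neighborSet v).toFinset \ A).card = degOf F v - A.card := by
        rw [Finset.card_sdiff_of_subset hAsub, ← Set.ncard_eq_toFinset_card']
        rfl
      have hle := Set.ncard_le_ncard hsub (Finset.finite_toSet _)
      rw [Set.ncard_coe_finset, hcard2] at hle
      omega
  · have hfv : ∀ w, f w ≠ v := fun w h => hvr ⟨w, h⟩
    apply hc'
    refine ⟨b, fun w => ⟨f w, hvmem _ (hfv w)⟩, ?_, ?_⟩
    · intro a b' h
      exact hfinj (congrArg Subtype.val h)
    · intro a b' hab'
      obtain ⟨h1, h2⟩ := hfadj hab'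
      have hadj' : F'.Adj (f a) (f b') := by
        rw [hF', SimpleGraph.Subgraph.deleteVerts_adj]
        exact ⟨Set.mem_univ _, by simpa using hfv a, Set.mem_univ _,
          by simpa using hfv b', by simpa using h1⟩
      refine ⟨hadj', ?_⟩
      rw [mixColor_ne v A F'.verts hvmem c' (hfv a) (hfv b')] at h2
      exact h2

/-- For every finite simple graph `H` with at least one edge, `s(H) ≥ 2δ(H) − 1`. -/
theorem stmt_0 (W : Type) [Fintype W] (H : SimpleGraph W)
    (hedge : H.edgeSet.Nonempty) :
    2 * minDeg H - 1 ≤ sVal H := by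
  obtain ⟨a0, b0, hab⟩ := adj_of_edge hedge
  obtain ⟨N, hN⟩ := exists_top_ramsey W H
  obtain ⟨m, G, hG⟩ := exists_minimal W H
    (N + (⊤ : SimpleGraph (Fin N)).edgeSet.ncard) N ⊤ le_rfl hN ⟨a0, b0, hab⟩
  unfold sVal
  refine le_csInf ⟨minDeg G, m, G, hG, rfl⟩ ?_
  rintro k ⟨n, F, hmin, rfl⟩
  exact core_bound H hedge hmin
end

section
/- Let d ≥ 1 and let H be a finite d-regular simple graph with a vertex v such that the neighborhood N(v) is an independent set and the graph obtained from H by deleting v and all vertices of N(v) is connected. Then there exists a finite graph G containing no copy of H, together with an independent set S of 2d − 1 vertices of G, such that for every subset S' ⊆ S of size d, the graph obtained from G by adding one new vertex adjacent exactly to the vertices of S' contains a copy of H. -/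
open SimpleGraph

/-- The graph obtained from `G` by adding one new vertex (`none`) adjacent exactly to
the vertices of `S'`. -/
def addVertex {V : Type*} (G : SimpleGraph V) (S' : Set V) : SimpleGraph (Option V) :=
  SimpleGraph.fromRel (fun x y =>
    ∃ a, x = some a ∧ (y = none ∧ a ∈ S' ∨ ∃ b, y = some b ∧ G.Adj a b))


section Gadget

variable {V : Type} (H : SimpleGraph V) (v : V) (d : ℕ)

/-- The "rest" of `H`: vertices outside `{v} ∪ N(v)`. -/
abbrev Rtype := ↥(({v} ∪ H.neighborSet v)ᶜ)

abbrev Ntype := ↥(H.neighborSet v)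

abbrev Ttype (d : ℕ) := {A : Finset (Fin (2 * d - 1)) // A.card = d}

abbrev Xtype (H : SimpleGraph V) (v : V) (d : ℕ) :=
  Fin (2 * d - 1) ⊕ (Ttype d × Rtype H v)

/-- The gadget graph. -/
def gadget (ξ : Ttype d → Ntype H v → Fin (2 * d - 1)) :
    SimpleGraph (Xtype H v d) where
  Adj a b := match a, b with
    | Sum.inl _, Sum.inl _ => False
    | Sum.inl s, Sum.inr (A, x) => ∃ y : Ntype H v, ξ A y = s ∧ H.Adj ↑y ↑x
    | Sum.inr (A, x), Sum.inl s => ∃ y : Ntype H v, ξ A y = s ∧ H.Adj ↑y ↑x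
    | Sum.inr (A, x), Sum.inr (B, x') => A = B ∧ H.Adj ↑x ↑x'
  symm := by
    constructor
    rintro (s | ⟨A, x⟩) (t | ⟨B, y⟩) h
    · exact h
    · exact h
    · exact h
    · exact ⟨h.1.symm, h.2.symm⟩
  loopless := by
    constructor
    rintro (s | ⟨A, x⟩) h
    · exact h
    · exact H.irrefl h.2

variable {H v d}

@[simp] lemma gadget_adj_inl_inl (ξ) (s t : Fin (2 * d - 1)) :
    ¬ (gadget H v d ξ).Adj (Sum.inl s) (Sum.inl t) := fun h => h

@[simp] lemma gadget_adj_inl_inr (ξ) (s : Fin (2 * d - 1)) (A : Ttype d) (x : Rtype H v) :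
    (gadget H v d ξ).Adj (Sum.inl s) (Sum.inr (A, x)) ↔
      ∃ y : Ntype H v, ξ A y = s ∧ H.Adj ↑y ↑x := Iff.rfl

@[simp] lemma gadget_adj_inr_inl (ξ) (s : Fin (2 * d - 1)) (A : Ttype d) (x : Rtype H v) :
    (gadget H v d ξ).Adj (Sum.inr (A, x)) (Sum.inl s) ↔
      ∃ y : Ntype H v, ξ A y = s ∧ H.Adj ↑y ↑x := Iff.rfl

@[simp] lemma gadget_adj_inr_inr (ξ) (A B : Ttype d) (x x' : Rtype H v) :
    (gadget H v d ξ).Adj (Sum.inr (A, x)) (Sum.inr (B, x')) ↔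
      A = B ∧ H.Adj ↑x ↑x' := Iff.rfl

open Classical in
noncomputable def gmap (ξ : Ttype d → Ntype H v → Fin (2 * d - 1)) (A : Ttype d)
    (x₀ : Rtype H v) : V → Xtype H v d := fun u =>
  if hu : H.Adj v u then Sum.inl (ξ A ⟨u, hu⟩)
  else if hR : u ∈ ({v} ∪ H.neighborSet v)ᶜ then Sum.inr (A, ⟨u, hR⟩)
  else Sum.inr (A, x₀)

lemma mem_Rset_iff (u : V) : u ∈ ({v} ∪ H.neighborSet v)ᶜ ↔ u ≠ v ∧ ¬ H.Adj v u := by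
  simp [Set.mem_compl_iff, not_or]

lemma gmap_of_adj (ξ) (A : Ttype d) (x₀ : Rtype H v) {u : V} (hu : H.Adj v u) :
    gmap ξ A x₀ u = Sum.inl (ξ A ⟨u, hu⟩) := by
  unfold gmap; rw [dif_pos hu]

lemma gmap_of_mem (ξ) (A : Ttype d) (x₀ : Rtype H v) {u : V}
    (hR : u ∈ ({v} ∪ H.neighborSet v)ᶜ) :
    gmap ξ A x₀ u = Sum.inr (A, ⟨u, hR⟩) := by
  have h1 : ¬ H.Adj v u := ((mem_Rset_iff u).1 hR).2
  unfold gmap; rw [dif_neg h1, dif_pos hR]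

lemma gmap_injOn (ξ) (hξ : ∀ A, Function.Injective (ξ A)) (A : Ttype d) (x₀ : Rtype H v) :
    Set.InjOn (gmap ξ A x₀) {u : V | u ≠ v} := by
  intro u hu u' hu' heq
  by_cases h1 : H.Adj v u <;> by_cases h2 : H.Adj v u'
  · rw [gmap_of_adj ξ A x₀ h1, gmap_of_adj ξ A x₀ h2] at heq
    exact congrArg Subtype.val (hξ A (Sum.inl.inj heq))
  · rw [gmap_of_adj ξ A x₀ h1, gmap_of_mem ξ A x₀ ((mem_Rset_iff u').2 ⟨hu', h2⟩)] at heq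
    exact absurd heq (by simp)
  · rw [gmap_of_mem ξ A x₀ ((mem_Rset_iff u).2 ⟨hu, h1⟩), gmap_of_adj ξ A x₀ h2] at heq
    exact absurd heq (by simp)
  · rw [gmap_of_mem ξ A x₀ ((mem_Rset_iff u).2 ⟨hu, h1⟩),
      gmap_of_mem ξ A x₀ ((mem_Rset_iff u').2 ⟨hu', h2⟩)] at heq
    have := (Prod.mk.injEq _ _ _ _).mp (Sum.inr.inj heq)
    exact congrArg Subtype.val this.2

lemma gmap_bijOn (ξ) (hξ : ∀ A, Function.Injective (ξ A)) (A : Ttype d) (x₀ x : Rtype H v) :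
    Set.BijOn (gmap ξ A x₀) (H.neighborSet ↑x)
      ((gadget H v d ξ).neighborSet (Sum.inr (A, x))) := by
  have hxv : ¬ H.Adj v ↑x := fun h => x.2 (Or.inr h)
  refine ⟨?_, ?_, ?_⟩
  · intro u hu
    have hu' : H.Adj ↑x u := hu
    have hune : u ≠ v := by rintro rfl; exact hxv hu'.symm
    by_cases hadj : H.Adj v u
    · rw [SimpleGraph.mem_neighborSet, gmap_of_adj ξ A x₀ hadj]
      exact ⟨⟨u, hadj⟩, rfl, hu'.symm⟩
    · have hR : u ∈ ({v} ∪ H.neighborSet v)ᶜ := (mem_Rset_iff u).2 ⟨hune, hadj⟩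
      rw [SimpleGraph.mem_neighborSet, gmap_of_mem ξ A x₀ hR]
      exact ⟨rfl, hu'⟩
  · intro u hu u' hu' heq
    have h1 : u ≠ v := by rintro rfl; exact hxv (H.adj_symm hu)
    have h2 : u' ≠ v := by rintro rfl; exact hxv (H.adj_symm hu')
    exact gmap_injOn ξ hξ A x₀ h1 h2 heq
  · rintro (s | ⟨B, y⟩) hz
    · obtain ⟨y, hy1, hy2⟩ := hz
      refine ⟨↑y, hy2.symm, ?_⟩
      rw [gmap_of_adj ξ A x₀ y.2]
      exact congrArg Sum.inl hy1
    · obtain ⟨hBA, hadj⟩ := hz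
      subst hBA
      refine ⟨↑y, hadj, ?_⟩
      rw [gmap_of_mem ξ A x₀ y.2]

lemma gadget_nbhd_ncard (ξ) (hξinj : ∀ A, Function.Injective (ξ A)) (A : Ttype d)
    (x₀ x : Rtype H v) :
    ((gadget H v d ξ).neighborSet (Sum.inr (A, x))).ncard = (H.neighborSet (↑x : V)).ncard := by
  rw [← (gmap_bijOn ξ hξinj A x₀ x).image_eq,
    Set.ncard_image_of_injOn (gmap_bijOn ξ hξinj A x₀ x).injOn]

lemma gadget_nbhd_inl (ξ) (hξinj : ∀ A, Function.Injective (ξ A)) (A : Ttype d)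
    (x₀ x : Rtype H v) :
    (gadget H v d ξ).neighborSet (Sum.inr (A, x)) ∩ Set.range Sum.inl =
      gmap ξ A x₀ '' (H.neighborSet ↑x ∩ H.neighborSet v) := by
  have hxv : ¬ H.Adj v ↑x := fun h => x.2 (Or.inr h)
  ext z
  constructor
  · rintro ⟨hz, s, rfl⟩
    obtain ⟨u, hu, hgu⟩ := (gmap_bijOn ξ hξinj A x₀ x).surjOn hz
    by_cases hadj : H.Adj v u
    · exact ⟨u, ⟨hu, hadj⟩, hgu⟩
    · exfalso
      have hune : u ≠ v := by rintro rfl; exact hxv (H.adj_symm hu)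
      rw [gmap_of_mem ξ A x₀ ((mem_Rset_iff u).2 ⟨hune, hadj⟩)] at hgu
      exact absurd hgu (by simp)
  · rintro ⟨u, ⟨hu1, hu2⟩, rfl⟩
    refine ⟨(gmap_bijOn ξ hξinj A x₀ x).mapsTo hu1, ?_⟩
    rw [gmap_of_adj ξ A x₀ hu2]
    exact ⟨_, rfl⟩

end Gadget

lemma gadget_free {V : Type} [Fintype V] {H : SimpleGraph V} {v : V} {d : ℕ} (hd : 1 ≤ d)
    (hreg : ∀ w : V, degOf H w = d)
    (hindep : ∀ x ∈ H.neighborSet v, ∀ y ∈ H.neighborSet v, ¬ H.Adj x y)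
    (hconn : (H.induce ({v} ∪ H.neighborSet v)ᶜ).Connected)
    (ξ : Ttype d → Ntype H v → Fin (2 * d - 1))
    (hξinj : ∀ A, Function.Injective (ξ A))
    (hξmem : ∀ (A : Ttype d) (s : Fin (2 * d - 1)), s ∈ A.1 ↔ ∃ y, ξ A y = s) :
    ¬ ContainsCopy (gadget H v d ξ) H := by
  classical
  rintro ⟨f, hfinj, hfadj⟩
  have hreg' : ∀ w : V, (H.neighborSet w).ncard = d := hreg
  obtain ⟨x₀⟩ : Nonempty (Rtype H v) := hconn.nonempty
  have hr1 : 1 ≤ (({v} ∪ H.neighborSet v)ᶜ : Set V).ncard :=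
    (Set.ncard_pos (Set.toFinite _)).2 ⟨↑x₀, x₀.2⟩
  have hcardV : Nat.card V = 1 + d + (({v} ∪ H.neighborSet v)ᶜ : Set V).ncard := by
    have h := Set.ncard_add_ncard_compl ({v} ∪ H.neighborSet v)
    have h2 : ({v} ∪ H.neighborSet v).ncard = 1 + d := by
      rw [Set.singleton_union, Set.ncard_insert_of_notMem (by simp : v ∉ H.neighborSet v)
        (Set.toFinite _), hreg']
      omega
    omega
  -- Step A : images of neighborhoods are full neighborhoods
  have himg : ∀ (a : V) (A : Ttype d) (x : Rtype H v), f a = Sum.inr (A, x) →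
      f '' (H.neighborSet a) = (gadget H v d ξ).neighborSet (Sum.inr (A, x)) := by
    intro a A x hfa
    apply Set.eq_of_subset_of_ncard_le
    · rintro _ ⟨u, hu, rfl⟩
      have h := hfadj hu
      rw [hfa] at h
      exact h
    · rw [Set.ncard_image_of_injective _ hfinj, gadget_nbhd_ncard ξ hξinj A x₀ x,
        hreg', hreg']
    · exact Set.toFinite _
  -- Step B : if one vertex of a copy is hit, the whole copy is hit
  have hslice : ∀ (A : Ttype d) (x : Rtype H v), (∃ a, f a = Sum.inr (A, x)) →
      ∀ x', ∃ b, f b = Sum.inr (A, x') := by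
    intro A x hx x'
    obtain ⟨a, hfa⟩ := hx
    suffices haux : ∀ (y z : Rtype H v) (_ : (H.induce ({v} ∪ H.neighborSet v)ᶜ).Walk y z)
        (a : V), f a = Sum.inr (A, y) → ∃ b, f b = Sum.inr (A, z) by
      obtain ⟨p⟩ := hconn.preconnected x x'
      exact haux x x' p a hfa
    intro y z p
    induction p with
    | nil => exact fun a ha => ⟨a, ha⟩
    | @cons u m w h q ih =>
      intro a ha
      have hadj : H.Adj ↑u ↑m := h
      have hmem : Sum.inr (A, m) ∈ (gadget H v d ξ).neighborSet (Sum.inr (A, u)) :=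
        ⟨rfl, hadj⟩
      rw [← himg a A u ha] at hmem
      obtain ⟨b, _, hfb⟩ := hmem
      exact ih b hfb
  -- Step C : all hit copies have the same index
  have huniq : ∀ (A B : Ttype d) (x y : Rtype H v), (∃ a, f a = Sum.inr (A, x)) →
      (∃ b, f b = Sum.inr (B, y)) → A = B := by
    intro A B x y hA hB
    by_contra hAB
    rcases eq_or_lt_of_le hd with hd1 | hd2
    · refine hAB (Subtype.ext ?_)
      have hA1 : A.1 = Finset.univ := Finset.eq_univ_of_card _ (by
        rw [A.2, Fintype.card_fin]; omega)
      have hB1 : B.1 = Finset.univ := Finset.eq_univ_of_card _ (by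
        rw [B.2, Fintype.card_fin]; omega)
      rw [hA1, hB1]
    · -- d ≥ 2 : both index sets appear among the `inl` vertices of the range
      have hinl : ∀ s ∈ A.1 ∪ B.1, ∃ c, f c = Sum.inl s := by
        have key : ∀ (C : Ttype d), (∀ x', ∃ b, f b = Sum.inr (C, x')) →
            ∀ s ∈ C.1, ∃ c, f c = Sum.inl s := by
          intro C hC s hsC
          obtain ⟨y', hy'⟩ := (hξmem C s).1 hsC
          have : ∃ u, u ∈ H.neighborSet (↑y' : V) ∧ u ≠ v := by
            by_contra hcon
            push_neg at hcon
            have hsub : H.neighborSet (↑y' : V) ⊆ {v} := fun u hu => hcon u hu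
            have hle := Set.ncard_le_ncard hsub (Set.finite_singleton v)
            rw [hreg', Set.ncard_singleton] at hle
            omega
          obtain ⟨u, hu, hune⟩ := this
          have huR : u ∈ ({v} ∪ H.neighborSet v)ᶜ :=
            (mem_Rset_iff u).2 ⟨hune, fun hadj => hindep (↑y') y'.2 u hadj hu⟩
          obtain ⟨b, hfb⟩ := hC ⟨u, huR⟩
          have hmem : Sum.inl s ∈ (gadget H v d ξ).neighborSet (Sum.inr (C, ⟨u, huR⟩)) :=
            ⟨y', hy', hu⟩
          rw [← himg b C _ hfb] at hmem
          obtain ⟨c, _, hfc⟩ := hmem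
          exact ⟨c, hfc⟩
        intro s hs
        rcases Finset.mem_union.1 hs with h | h
        exacts [key A (hslice A x hA) s h, key B (hslice B y hB) s h]
      -- counting
      set U1 : Set (Xtype H v d) := Sum.inl '' ↑(A.1 ∪ B.1) with hU1def
      set U2 : Set (Xtype H v d) := (fun x' : Rtype H v => Sum.inr (A, x')) '' Set.univ
        with hU2def
      set U3 : Set (Xtype H v d) := (fun x' : Rtype H v => Sum.inr (B, x')) '' Set.univ
        with hU3def
      have hU1r : U1 ⊆ Set.range f := by
        rintro _ ⟨s, hs, rfl⟩
        obtain ⟨c, hc⟩ := hinl s hs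
        exact ⟨c, hc⟩
      have hU2r : U2 ⊆ Set.range f := by
        rintro _ ⟨x', -, rfl⟩
        obtain ⟨b, hb⟩ := hslice A x hA x'
        exact ⟨b, hb⟩
      have hU3r : U3 ⊆ Set.range f := by
        rintro _ ⟨x', -, rfl⟩
        obtain ⟨b, hb⟩ := hslice B y hB x'
        exact ⟨b, hb⟩
      have hc1 : U1.ncard = (A.1 ∪ B.1).card := by
        rw [hU1def, Set.ncard_image_of_injective _ Sum.inl_injective, Set.ncard_coe_finset]
      have hinj2 : Function.Injective (fun x' : Rtype H v => (Sum.inr (A, x') : Xtype H v d)) := by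
        intro a b h
        simpa using h
      have hinj3 : Function.Injective (fun x' : Rtype H v => (Sum.inr (B, x') : Xtype H v d)) := by
        intro a b h
        simpa using h
      have hc2 : U2.ncard = (({v} ∪ H.neighborSet v)ᶜ : Set V).ncard := by
        rw [hU2def, Set.ncard_image_of_injective _ hinj2, Set.ncard_univ,
          Nat.card_coe_set_eq]
      have hc3 : U3.ncard = (({v} ∪ H.neighborSet v)ᶜ : Set V).ncard := by
        rw [hU3def, Set.ncard_image_of_injective _ hinj3, Set.ncard_univ,
          Nat.card_coe_set_eq]
      have hd1' : d + 1 ≤ (A.1 ∪ B.1).card := by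
        have hne : A.1 ≠ A.1 ∪ B.1 := by
          intro h
          refine hAB (Subtype.ext ?_)
          have hBA : B.1 ⊆ A.1 := fun t ht => h ▸ Finset.mem_union_right _ ht
          exact (Finset.eq_of_subset_of_card_le hBA (by rw [A.2, B.2])).symm
        have := Finset.card_lt_card (Finset.ssubset_iff_subset_ne.2
          ⟨Finset.subset_union_left, hne⟩)
        rw [A.2] at this
        omega
      have hdis12 : Disjoint U1 U2 := by
        rw [Set.disjoint_left]
        rintro _ ⟨s, _, rfl⟩ ⟨x', -, h⟩
        exact absurd h (by simp)
      have hdis13 : Disjoint U1 U3 := by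
        rw [Set.disjoint_left]
        rintro _ ⟨s, _, rfl⟩ ⟨x', -, h⟩
        exact absurd h (by simp)
      have hdis23 : Disjoint U2 U3 := by
        rw [Set.disjoint_left]
        rintro _ ⟨x', -, rfl⟩ ⟨x'', -, h⟩
        have h2 := Sum.inr.inj h
        exact hAB (Prod.ext_iff.1 h2).1.symm
      have hunion : (U1 ∪ U2 ∪ U3).ncard = U1.ncard + U2.ncard + U3.ncard := by
        rw [Set.ncard_union_eq (by
            rw [Set.disjoint_union_left]
            exact ⟨hdis13, hdis23⟩) ((Set.toFinite _).union (Set.toFinite _)) (Set.toFinite _),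
          Set.ncard_union_eq hdis12 (Set.toFinite _) (Set.toFinite _)]
      have hle : (U1 ∪ U2 ∪ U3).ncard ≤ Nat.card V := by
        have h1 : U1 ∪ U2 ∪ U3 ⊆ Set.range f := by
          intro z hz
          rcases hz with (hz | hz) | hz
          exacts [hU1r hz, hU2r hz, hU3r hz]
        calc (U1 ∪ U2 ∪ U3).ncard ≤ (Set.range f).ncard :=
              Set.ncard_le_ncard h1 (Set.toFinite _)
          _ = Nat.card V := by
              rw [← Set.image_univ, Set.ncard_image_of_injective _ hfinj, Set.ncard_univ]
      rw [hunion, hc1, hc2, hc3] at hle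
      omega
  -- Step D : some copy is hit
  have hNvne : (H.neighborSet v).Nonempty :=
    Set.nonempty_of_ncard_ne_zero (by rw [hreg']; omega)
  obtain ⟨y₀, hy₀⟩ := hNvne
  have hadj0 := hfadj hy₀
  obtain ⟨A₀, x₁, a₁, hfa₁⟩ : ∃ (A : Ttype d) (x : Rtype H v) (a : V),
      f a = Sum.inr (A, x) := by
    rcases hfv : f v with s | ⟨A, xx⟩
    · rcases hfy : f y₀ with t | ⟨B, z⟩
      · rw [hfv, hfy] at hadj0
        exact absurd hadj0 (by simp)
      · exact ⟨B, z, y₀, hfy⟩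
    · exact ⟨A, xx, v, hfv⟩
  -- Step E : the partition of V
  set P : Set V := {a | ∃ x, f a = Sum.inr (A₀, x)} with hPdef
  have hPcompl : ∀ a ∉ P, ∃ s, f a = Sum.inl s := by
    intro a ha
    rcases hfa : f a with s | ⟨B, x⟩
    · exact ⟨s, rfl⟩
    · exact absurd ⟨x, by rw [hfa, huniq B A₀ x x₁ ⟨a, hfa⟩ ⟨a₁, hfa₁⟩]⟩ ha
  have hPmem : ∀ (a : V) (B : Ttype d) (x : Rtype H v), f a = Sum.inr (B, x) → a ∈ P := by
    intro a B x hfa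
    exact ⟨x, by rw [hfa, huniq B A₀ x x₁ ⟨a, hfa⟩ ⟨a₁, hfa₁⟩]⟩
  have hPcard : P.ncard = (({v} ∪ H.neighborSet v)ᶜ : Set V).ncard := by
    have hbij : Set.BijOn f P ((fun x' : Rtype H v => (Sum.inr (A₀, x') : Xtype H v d)) ''
        Set.univ) := by
      refine ⟨?_, fun a _ b _ h => hfinj h, ?_⟩
      · rintro a ⟨x, hx⟩
        exact ⟨x, trivial, hx.symm⟩
      · rintro _ ⟨x', -, rfl⟩
        obtain ⟨b, hb⟩ := hslice A₀ x₁ ⟨a₁, hfa₁⟩ x'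
        exact ⟨b, ⟨x', hb⟩, hb⟩
    have hinj2 : Function.Injective (fun x' : Rtype H v => (Sum.inr (A₀, x') : Xtype H v d)) := by
      intro a b h
      simpa using h
    calc P.ncard = (f '' P).ncard := (Set.ncard_image_of_injOn hbij.injOn).symm
      _ = _ := by
          rw [hbij.image_eq, Set.ncard_image_of_injective _ hinj2, Set.ncard_univ,
            Nat.card_coe_set_eq]
  have hIcard : (Pᶜ : Set V).ncard = 1 + d := by
    have h := Set.ncard_add_ncard_compl P
    rw [hPcard] at h
    omega
  -- Step F : double counting
  set NvF : Finset V := (H.neighborSet v).toFinset with hNvFdef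
  set RsF : Finset V := (({v} ∪ H.neighborSet v)ᶜ : Set V).toFinset with hRsFdef
  set PF : Finset V := P.toFinset with hPFdef
  set IF : Finset V := (Pᶜ : Set V).toFinset with hIFdef
  have hIFcard : IF.card = 1 + d := by
    rw [hIFdef, ← Set.ncard_eq_toFinset_card', hIcard]
  have hNvFcard : NvF.card = d := by
    rw [hNvFdef, ← Set.ncard_eq_toFinset_card', hreg']
  -- row sums
  have hrow : ∀ a ∈ IF, (PF.filter (fun b => H.Adj a b)).card = d := by
    intro a haI
    have haI' : a ∉ P := by
      have := Set.mem_toFinset.1 haI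
      exact this
    have hNP : ∀ b, H.Adj a b → b ∈ P := by
      intro b hab
      rcases hfb : f b with t | ⟨B, x⟩
      · obtain ⟨s, hfa⟩ := hPcompl a haI'
        have h := hfadj hab
        rw [hfa, hfb] at h
        exact absurd h (by simp)
      · exact hPmem b B x hfb
    have hfe : PF.filter (fun b => H.Adj a b) = (H.neighborSet a).toFinset := by
      ext b
      simp only [Finset.mem_filter, hPFdef, Set.mem_toFinset, SimpleGraph.mem_neighborSet]
      exact ⟨fun h => h.2, fun h => ⟨hNP b h, h⟩⟩
    rw [hfe, ← Set.ncard_eq_toFinset_card', hreg']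
  -- column sums
  have hcol : ∀ (b : V) (x : Rtype H v), f b = Sum.inr (A₀, x) →
      (IF.filter (fun a => H.Adj a b)).card =
        ((H.neighborSet (↑x : V)) ∩ (H.neighborSet v)).ncard := by
    intro b x hfb
    have hseteq : (H.neighborSet b ∩ Pᶜ : Set V) =
        f ⁻¹' ((gadget H v d ξ).neighborSet (Sum.inr (A₀, x)) ∩ Set.range Sum.inl) ∩
          H.neighborSet b := by
      ext u
      constructor
      · rintro ⟨hu1, hu2⟩
        obtain ⟨s, hs⟩ := hPcompl u hu2
        refine ⟨⟨?_, ⟨s, hs.symm⟩⟩, hu1⟩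
        have h := hfadj hu1
        rw [hfb] at h
        show f u ∈ (gadget H v d ξ).neighborSet _
        rw [SimpleGraph.mem_neighborSet]
        exact h
      · rintro ⟨⟨h1, s, hs⟩, hu⟩
        refine ⟨hu, fun huP => ?_⟩
        obtain ⟨x', hx'⟩ := huP
        rw [hx'] at hs
        exact absurd hs (by simp)
    have himgeq : f '' (H.neighborSet b ∩ Pᶜ) =
        (gadget H v d ξ).neighborSet (Sum.inr (A₀, x)) ∩ Set.range Sum.inl := by
      apply Set.Subset.antisymm
      · rintro _ ⟨u, hu, rfl⟩
        rw [hseteq] at hu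
        exact hu.1
      · rintro z ⟨hz1, hz2⟩
        have hz1' := hz1
        rw [← himg b A₀ x hfb] at hz1'
        obtain ⟨u, hu, rfl⟩ := hz1'
        exact ⟨u, by rw [hseteq]; exact ⟨⟨hz1, hz2⟩, hu⟩, rfl⟩
    have hcard1 : (H.neighborSet b ∩ Pᶜ : Set V).ncard =
        ((H.neighborSet (↑x : V)) ∩ (H.neighborSet v)).ncard := by
      have e1 : (H.neighborSet b ∩ Pᶜ : Set V).ncard =
          ((gadget H v d ξ).neighborSet (Sum.inr (A₀, x)) ∩ Set.range Sum.inl).ncard := by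
        rw [← himgeq, Set.ncard_image_of_injective _ hfinj]
      rw [e1, gadget_nbhd_inl ξ hξinj A₀ x₀ x]
      apply Set.ncard_image_of_injOn
      apply (gmap_injOn ξ hξinj A₀ x₀).mono
      intro u hu
      exact fun huv => H.loopless.irrefl v (huv ▸ hu.2)
    have hfe : IF.filter (fun a => H.Adj a b) = (H.neighborSet b ∩ Pᶜ : Set V).toFinset := by
      ext u
      simp only [Finset.mem_filter, hIFdef, Set.mem_toFinset, Set.mem_inter_iff,
        SimpleGraph.mem_neighborSet]
      exact ⟨fun h => ⟨h.2.symm, h.1⟩, fun h => ⟨h.2, h.1.symm⟩⟩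
    rw [hfe, ← Set.ncard_eq_toFinset_card', hcard1]
  -- the projection to the copy
  have hcolsum : ∑ b ∈ PF, (IF.filter (fun a => H.Adj a b)).card =
      ∑ x : Rtype H v, ((H.neighborSet (↑x : V)) ∩ (H.neighborSet v)).ncard := by
    classical
    refine Finset.sum_bij (fun b _ => Sum.elim (fun _ => x₁) Prod.snd (f b)) ?_ ?_ ?_ ?_
    · intro b hb
      exact Finset.mem_univ _
    · intro b hb b' hb' heq
      obtain ⟨x, hx⟩ := Set.mem_toFinset.1 hb
      obtain ⟨x', hx'⟩ := Set.mem_toFinset.1 hb'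
      simp only [hx, hx', Sum.elim_inr] at heq
      apply hfinj
      rw [hx, hx']
      exact congrArg (fun t => Sum.inr (A₀, t)) heq
    · intro x _
      obtain ⟨b, hb⟩ := hslice A₀ x₁ ⟨a₁, hfa₁⟩ x
      exact ⟨b, Set.mem_toFinset.2 ⟨x, hb⟩, by simp only [hb, Sum.elim_inr]⟩
    · intro b hb
      obtain ⟨x, hx⟩ := Set.mem_toFinset.1 hb
      simp only [hx, Sum.elim_inr]
      exact hcol b x hx
  -- compute the right-hand side
  have hrhs : ∑ x : Rtype H v, ((H.neighborSet (↑x : V)) ∩ (H.neighborSet v)).ncard =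
      d * (d - 1) := by
    have hterm : ∀ x : Rtype H v, ((H.neighborSet (↑x : V)) ∩ (H.neighborSet v)).ncard =
        (NvF.filter (fun y => H.Adj (↑x : V) y)).card := by
      intro x
      rw [Set.ncard_eq_toFinset_card']
      congr 1
      ext y
      simp [hNvFdef, Finset.mem_filter, and_comm]
    calc ∑ x : Rtype H v, ((H.neighborSet (↑x : V)) ∩ (H.neighborSet v)).ncard
        = ∑ x : Rtype H v, (NvF.filter (fun y => H.Adj (↑x : V) y)).card := by
          exact Finset.sum_congr rfl (fun x _ => hterm x)
      _ = ∑ u ∈ RsF, (NvF.filter (fun y => H.Adj u y)).card := by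
          rw [Finset.sum_subtype RsF (fun u => Set.mem_toFinset) _]
      _ = ∑ u ∈ RsF, ∑ y ∈ NvF, (if H.Adj u y then 1 else 0) := by
          exact Finset.sum_congr rfl (fun u _ => (Finset.card_filter _ _))
      _ = ∑ y ∈ NvF, ∑ u ∈ RsF, (if H.Adj u y then 1 else 0) := Finset.sum_comm
      _ = ∑ y ∈ NvF, (RsF.filter (fun u => H.Adj u y)).card := by
          exact Finset.sum_congr rfl (fun y _ => (Finset.card_filter _ _).symm)
      _ = ∑ y ∈ NvF, (d - 1) := by
          refine Finset.sum_congr rfl (fun y hy => ?_)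
          have hyv : H.Adj v y := Set.mem_toFinset.1 hy
          have hfe : RsF.filter (fun u => H.Adj u y) =
              (H.neighborSet y \ {v} : Set V).toFinset := by
            ext u
            simp only [Finset.mem_filter, hRsFdef, Set.mem_toFinset, Set.mem_diff,
              Set.mem_singleton_iff, SimpleGraph.mem_neighborSet]
            constructor
            · rintro ⟨hu1, hu2⟩
              exact ⟨hu2.symm, ((mem_Rset_iff u).1 hu1).1⟩
            · rintro ⟨hu1, hu2⟩
              refine ⟨(mem_Rset_iff u).2 ⟨hu2, fun hvu => ?_⟩, hu1.symm⟩
              exact hindep u hvu y hyv hu1.symm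
          rw [hfe, ← Set.ncard_eq_toFinset_card',
            Set.ncard_diff_singleton_of_mem (show v ∈ H.neighborSet y from hyv.symm), hreg']
      _ = d * (d - 1) := by
          rw [Finset.sum_const, hNvFcard, smul_eq_mul]
  -- put everything together
  have hlhs : ∑ a ∈ IF, (PF.filter (fun b => H.Adj a b)).card = (1 + d) * d := by
    rw [Finset.sum_congr rfl hrow, Finset.sum_const, hIFcard, smul_eq_mul]
  have hswap : ∑ a ∈ IF, (PF.filter (fun b => H.Adj a b)).card =
      ∑ b ∈ PF, (IF.filter (fun a => H.Adj a b)).card := by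
    calc ∑ a ∈ IF, (PF.filter (fun b => H.Adj a b)).card
        = ∑ a ∈ IF, ∑ b ∈ PF, (if H.Adj a b then 1 else 0) := by
          exact Finset.sum_congr rfl (fun a _ => Finset.card_filter _ _)
      _ = ∑ b ∈ PF, ∑ a ∈ IF, (if H.Adj a b then 1 else 0) := Finset.sum_comm
      _ = ∑ b ∈ PF, (IF.filter (fun a => H.Adj a b)).card := by
          exact Finset.sum_congr rfl (fun b _ => (Finset.card_filter _ _).symm)
  rw [hlhs, hcolsum, hrhs] at hswap
  have := Nat.eq_of_mul_eq_mul_right (by omega : 0 < d)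
    (by rw [hswap]; ring : (1 + d) * d = (d - 1) * d)
  omega

lemma addVertex_adj_none_some {V : Type*} (G : SimpleGraph V) (S' : Set V) {a : V}
    (ha : a ∈ S') : (addVertex G S').Adj none (some a) := by
  rw [addVertex, SimpleGraph.fromRel_adj]
  exact ⟨by simp, Or.inr ⟨a, rfl, Or.inl ⟨rfl, ha⟩⟩⟩

lemma addVertex_adj_some_some {V : Type*} (G : SimpleGraph V) (S' : Set V) {a b : V}
    (h : G.Adj a b) : (addVertex G S').Adj (some a) (some b) := by
  rw [addVertex, SimpleGraph.fromRel_adj]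
  exact ⟨by simp [h.ne], Or.inl ⟨a, rfl, Or.inr ⟨b, rfl, h⟩⟩⟩

/-- Let `d ≥ 1` and let `H` be a finite `d`-regular graph with a vertex `v` whose
neighborhood `N(v)` is an independent set and such that `H − v − N(v)` is connected.
Then there is a finite `H`-free graph `G` with an independent set `S` of `2d − 1`
vertices such that for every subset `S' ⊆ S` of size `d`, adding a new vertex adjacent
exactly to the vertices of `S'` creates a copy of `H`. -/
theorem stmt_15 (d : ℕ) (hd : 1 ≤ d) (V : Type) [Fintype V] (H : SimpleGraph V)
    (hreg : ∀ w : V, degOf H w = d) (v : V)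
    (hindep : ∀ x ∈ H.neighborSet v, ∀ y ∈ H.neighborSet v, ¬ H.Adj x y)
    (hconn : (H.induce ({v} ∪ H.neighborSet v)ᶜ).Connected) :
    ∃ (n : ℕ) (G : SimpleGraph (Fin n)) (S : Finset (Fin n)),
      ¬ ContainsCopy G H ∧
      S.card = 2 * d - 1 ∧
      (∀ x ∈ S, ∀ y ∈ S, ¬ G.Adj x y) ∧
      ∀ S' : Finset (Fin n), S' ⊆ S → S'.card = d →
        ContainsCopy (addVertex G (↑S' : Set (Fin n))) H := by
  classical
  obtain ⟨x₀⟩ : Nonempty (Rtype H v) := hconn.nonempty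
  -- choose the bijections between N(v) and the d-subsets of Fin (2d-1)
  have hNtcard : Fintype.card (Ntype H v) = d := by
    rw [← Nat.card_eq_fintype_card, Nat.card_coe_set_eq]
    exact hreg v
  have hξex : ∀ A : Ttype d, ∃ g : Ntype H v → Fin (2 * d - 1),
      Function.Injective g ∧ ∀ s, s ∈ A.1 ↔ ∃ y, g y = s := by
    intro A
    have hAcard : Fintype.card ↥(A.1) = d := by rw [Fintype.card_coe]; exact A.2
    have eA : Ntype H v ≃ ↥(A.1) := Fintype.equivOfCardEq (by rw [hNtcard, hAcard])
    refine ⟨fun y => ↑(eA y), fun y y' h => eA.injective (Subtype.coe_injective h), ?_⟩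
    intro s
    constructor
    · intro hs
      exact ⟨eA.symm ⟨s, hs⟩, by simp⟩
    · rintro ⟨y, rfl⟩
      exact (eA y).2
  choose ξ hξinj hξmem using hξex
  -- the finite vertex type
  obtain ⟨n, ⟨e⟩⟩ := Finite.exists_equiv_fin (Xtype H v d)
  refine ⟨n, (gadget H v d ξ).comap ⇑e.symm,
    Finset.univ.image (fun s : Fin (2 * d - 1) => e (Sum.inl s)), ?_, ?_, ?_, ?_⟩
  · -- H-freeness
    rintro ⟨f, hfinj, hfadj⟩
    refine gadget_free hd hreg hindep hconn ξ hξinj hξmem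
      ⟨fun a => e.symm (f a), fun a b h => hfinj (e.symm.injective h), ?_⟩
    intro a b hab
    exact hfadj hab
  · -- size of S
    rw [Finset.card_image_of_injective _ (fun a b h => Sum.inl.inj (e.injective h)),
      Finset.card_univ, Fintype.card_fin]
  · -- independence of S
    intro x hx y hy hadj
    obtain ⟨s, -, rfl⟩ := Finset.mem_image.1 hx
    obtain ⟨t, -, rfl⟩ := Finset.mem_image.1 hy
    have : (gadget H v d ξ).Adj (Sum.inl s) (Sum.inl t) := by
      simpa using hadj
    exact this
  · -- extension property
    intro S' hS'sub hS'card
    set A : Finset (Fin (2 * d - 1)) :=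
      Finset.univ.filter (fun s => e (Sum.inl s) ∈ S') with hAdef
    have hinj : Function.Injective (fun s : Fin (2 * d - 1) => e (Sum.inl s)) :=
      fun a b h => Sum.inl.inj (e.injective h)
    have himgA : Finset.image (fun s : Fin (2 * d - 1) => e (Sum.inl s)) A = S' := by
      ext i
      constructor
      · intro hi
        obtain ⟨s, hs, rfl⟩ := Finset.mem_image.1 hi
        exact (Finset.mem_filter.1 hs).2
      · intro hi
        obtain ⟨s, -, rfl⟩ := Finset.mem_image.1 (hS'sub hi)
        exact Finset.mem_image.2 ⟨s, Finset.mem_filter.2 ⟨Finset.mem_univ _, hi⟩, rfl⟩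
    have hA : A.card = d := by
      have h2 : S'.card = A.card := by
        rw [← himgA]
        exact Finset.card_image_of_injective A hinj
      rw [← h2]
      exact hS'card
    set TA : Ttype d := ⟨A, hA⟩ with hTAdef
    refine ⟨fun u => if u = v then none else some (e (gmap ξ TA x₀ u)), ?_, ?_⟩
    · -- injectivity
      intro a b hab
      dsimp only at hab
      by_cases ha : a = v <;> by_cases hb : b = v
      · rw [ha, hb]
      · rw [if_pos ha, if_neg hb] at hab; exact absurd hab (by simp)
      · rw [if_neg ha, if_pos hb] at hab; exact absurd hab (by simp)
      · rw [if_neg ha, if_neg hb] at hab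
        exact gmap_injOn ξ hξinj TA x₀ ha hb (e.injective (Option.some.inj hab))
    · -- adjacency
      intro a b hab
      dsimp only
      have hmemS' : ∀ (y : Ntype H v), e (Sum.inl (ξ TA y)) ∈ (↑S' : Set (Fin n)) := by
        intro y
        have : ξ TA y ∈ A := (hξmem TA (ξ TA y)).2 ⟨y, rfl⟩
        exact Finset.mem_coe.2 ((Finset.mem_filter.1 this).2)
      by_cases ha : a = v
      · have hab' : H.Adj v b := ha ▸ hab
        have hbv : b ≠ v := fun h => H.loopless.irrefl v (h ▸ hab')
        rw [if_pos ha, if_neg hbv, gmap_of_adj ξ TA x₀ hab']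
        exact addVertex_adj_none_some _ _ (hmemS' ⟨b, hab'⟩)
      · by_cases hb : b = v
        · have hab' : H.Adj a v := hb ▸ hab
          rw [if_pos hb, if_neg ha, gmap_of_adj ξ TA x₀ hab'.symm]
          exact (addVertex_adj_none_some _ _ (hmemS' ⟨a, hab'.symm⟩)).symm
        · rw [if_neg ha, if_neg hb]
          apply addVertex_adj_some_some
          show (gadget H v d ξ).Adj (e.symm (e _)) (e.symm (e _))
          rw [e.symm_apply_apply, e.symm_apply_apply]
          by_cases hva : H.Adj v a <;> by_cases hvb : H.Adj v b
          · exact absurd hab (hindep a hva b hvb)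
          · rw [gmap_of_adj ξ TA x₀ hva, gmap_of_mem ξ TA x₀ ((mem_Rset_iff b).2 ⟨hb, hvb⟩)]
            exact ⟨⟨a, hva⟩, rfl, hab⟩
          · rw [gmap_of_mem ξ TA x₀ ((mem_Rset_iff a).2 ⟨ha, hva⟩), gmap_of_adj ξ TA x₀ hvb]
            exact ⟨⟨b, hvb⟩, rfl, hab.symm⟩
          · rw [gmap_of_mem ξ TA x₀ ((mem_Rset_iff a).2 ⟨ha, hva⟩),
              gmap_of_mem ξ TA x₀ ((mem_Rset_iff b).2 ⟨hb, hvb⟩)]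
            exact ⟨rfl, hab⟩
end
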